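/- Set T = r d (α h K (1-c) - 1 - 2 α h (1-c) x*)/(α θ K (1-c)) and D = r d (α K (1-c)(θ - h d) - d)/(K α θ (1-c)) (the trace and determinant of the Jacobian of f at (x*, y*)). Assume θ > θ1, θ > θ2, α > 1/(K h), and 0 < c < c2. Then T > 0 and D > 0. -/

import Mathlib

/-- If θ > θ₁, θ > θ₂, α > 1/(Kh) and 0 < c < c₂, then the trace T of the
Jacobian at the interior equilibrium is positive and the determinant D is positive. -/
theorem interior_trace_det_low_complexity
    (r K α h d θ c xs T D : ℝ)
    (hr : 0 < r) (hK : 0 < K) (hα : 0 < α) (hh : 0 < h) (hd : 0 < d)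
    (hθ0 : 0 < θ) (hθlt : θ < 1) (hc0 : 0 < c) (hclt : c < 1)
    (hθ1 : θ > h * d + d / (α * K))
    (hθ2 : θ > h * d * (α * K * h + 1) / (α * K * h - 1))
    (hα' : α > 1 / (K * h))
    (hc2 : c < 1 - (θ + h * d) / (α * K * h * (θ - h * d)))
    (hxs : xs = d / (α * (1 - c) * (θ - h * d)))
    (hT : T = r * d * (α * h * K * (1 - c) - 1 - 2 * α * h * (1 - c) * xs) / (α * θ * K * (1 - c)))
    (hD : D = r * d * (α * K * (1 - c) * (θ - h * d) - d) / (K * α * θ * (1 - c))) :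
    0 < T ∧ 0 < D := by
  have hm : 0 < 1 - c := by linarith
  have hαK : 0 < α * K := mul_pos hα hK
  have hs : 0 < θ - h * d := by
    have : 0 < d / (α * K) := div_pos hd hαK
    linarith
  have hden : 0 < α * K * h * (θ - h * d) := by positivity
  have h2 : (θ + h * d) / (α * K * h * (θ - h * d)) < 1 - c := by linarith
  have hkey : θ + h * d < (1 - c) * (α * K * h * (θ - h * d)) :=
    (div_lt_iff₀ hden).mp h2
  have hxd : α * h * (1 - c) * (θ - h * d) * xs = h * d := by
    rw [hxs]; field_simp
  have hNs : 0 < (α * h * K * (1 - c) - 1 - 2 * α * h * (1 - c) * xs) * (θ - h * d) := by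
    nlinarith [hkey, hxd]
  have hN : 0 < α * h * K * (1 - c) - 1 - 2 * α * h * (1 - c) * xs := by
    nlinarith [hNs, hs]
  have hDnum : 0 < α * K * (1 - c) * (θ - h * d) - d := by
    nlinarith [hkey, hθ0, hh, mul_pos hh hd]
  constructor
  · rw [hT]
    exact div_pos (mul_pos (mul_pos hr hd) hN) (by positivity)
  · rw [hD]
    exact div_pos (mul_pos (mul_pos hr hd) hDnum) (by positivity)
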